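/- Minimal obstructions obstruct cohomological connectedness. Let j ∈ {1,…,d−1} and j ≤ k ≤ d. If a simplicial complex G on [n] contains a 4-tuple (K,C,w,a) forming a copy of M̂_{j,k}, then H^j(G;R) ≠ 0. -/

import Mathlib

open MeasureTheory Filter Finset Asymptotics
open scoped Classical

noncomputable section

namespace RSC

/-! ### Simplicial complexes on the vertex set `Fin N` -/

variable {N : ℕ}

/-- A simplicial complex on `[N]`: a downward-closed family of non-empty finite
subsets of the vertex set containing all singletons. -/
def IsComplex (G : Set (Finset (Fin N))) : Prop :=
  (∀ A ∈ G, A.Nonempty) ∧ (∀ v : Fin N, ({v} : Finset (Fin N)) ∈ G) ∧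
    ∀ A ∈ G, ∀ B : Finset (Fin N), B ⊆ A → B.Nonempty → B ∈ G

/-- A `d`-dimensional simplicial complex: no `(d+1)`-simplices, i.e. all faces have
at most `d+1` vertices. -/
def IsDComplex (d : ℕ) (G : Set (Finset (Fin N))) : Prop :=
  IsComplex G ∧ ∀ A ∈ G, A.card ≤ d + 1

/-- `σ` is an ordered simplex of `G` (on `m` vertices, i.e. of dimension `m-1`). -/
def OrdSimp (G : Set (Finset (Fin N))) {m : ℕ} (σ : Fin m → Fin N) : Prop :=
  Function.Injective σ ∧ Finset.image σ Finset.univ ∈ G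

/-- An `(m-1)`-dimensional cochain of `G` with coefficients in `R`: a function on
ordered `m`-tuples vanishing off the ordered simplices of `G` and changing sign
under transpositions of two vertices. -/
def IsCochain (G : Set (Finset (Fin N))) (m : ℕ) {R : Type} [AddCommGroup R]
    (f : (Fin m → Fin N) → R) : Prop :=
  (∀ σ : Fin m → Fin N, ¬ OrdSimp G σ → f σ = 0) ∧
    ∀ (σ : Fin m → Fin N) (a b : Fin m), a ≠ b → f (σ ∘ Equiv.swap a b) = - f σ

/-- The coboundary of a function on ordered `m`-tuples. -/
def delta {R : Type} [AddCommGroup R] {m : ℕ} (g : (Fin m → Fin N) → R) :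
    (Fin (m + 1) → Fin N) → R :=
  fun σ => ∑ i : Fin (m + 1), (-1 : ℤ) ^ (i : ℕ) • g (σ ∘ i.succAbove)

/-- An `(m-1)`-dimensional cocycle: a cochain whose coboundary vanishes on all
ordered `(m+1)`-tuples forming simplices of `G`. -/
def IsCocycle (G : Set (Finset (Fin N))) (m : ℕ) {R : Type} [AddCommGroup R]
    (f : (Fin m → Fin N) → R) : Prop :=
  IsCochain G m f ∧ ∀ σ : Fin (m + 1) → Fin N, OrdSimp G σ → delta f σ = 0

/-- `f` (a function on ordered `(m+1)`-tuples) is an `m`-dimensional coboundary: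
on the ordered simplices of `G` it agrees with the coboundary of an
`(m-1)`-dimensional cochain. -/
def IsCobound (G : Set (Finset (Fin N))) (m : ℕ) {R : Type} [AddCommGroup R]
    (f : (Fin (m + 1) → Fin N) → R) : Prop :=
  ∃ g : (Fin m → Fin N) → R, IsCochain G m g ∧
    ∀ σ : Fin (m + 1) → Fin N, OrdSimp G σ → f σ = delta g σ

/-- The support of a cochain: the unordered simplices on which it does not vanish. -/
def cochainSupport {R : Type} [AddCommGroup R] {m : ℕ} (f : (Fin m → Fin N) → R) :
    Set (Finset (Fin N)) :=
  {A | ∃ σ : Fin m → Fin N, Function.Injective σ ∧ Finset.image σ Finset.univ = A ∧ f σ ≠ 0}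

/-- `H^j(G;R) = 0`: every `j`-cocycle is a `j`-coboundary. -/
def HTrivial (G : Set (Finset (Fin N))) (R : Type) [AddCommGroup R] (j : ℕ) : Prop :=
  ∀ f : (Fin (j + 1) → Fin N) → R, IsCocycle G (j + 1) f → IsCobound G j f

/-- Topological connectedness (equivalently `H^0(G;R) = R`): any two vertices are
joined by a sequence of vertices in which consecutive vertices share a simplex. -/
def TopConnected (G : Set (Finset (Fin N))) : Prop :=
  ∀ u v : Fin N, Relation.ReflTransGen (fun x y => ∃ A ∈ G, x ∈ A ∧ y ∈ A) u v

/-- `R`-cohomological `j`-connectedness: `H^0(G;R) = R` and `H^i(G;R) = 0` for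
all `1 ≤ i ≤ j`. -/
def CohomConnected (G : Set (Finset (Fin N))) (R : Type) [AddCommGroup R] (j : ℕ) : Prop :=
  TopConnected G ∧ ∀ i : ℕ, 1 ≤ i → i ≤ j → HTrivial G R i

/-- `A` is a `j`-shell of `G`: a `(j+2)`-set all of whose `(j+1)`-subsets are
`j`-simplices of `G`. -/
def IsShell (G : Set (Finset (Fin N))) (j : ℕ) (A : Finset (Fin N)) : Prop :=
  A.card = j + 2 ∧ ∀ B ⊆ A, B.card = j + 1 → B ∈ G

/-- The `j`-flower in `K` with centre `C`: the petals `C ∪ {w}`, `w ∈ K \ C`. -/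
def flower (K C : Finset (Fin N)) : Set (Finset (Fin N)) :=
  {P | ∃ w ∈ K, w ∉ C ∧ P = insert w C}

/-- `(K, C)` is a copy of `M_{j,k}` in `G`. -/
def IsCopyM (G : Set (Finset (Fin N))) (j k : ℕ) (K C : Finset (Fin N)) : Prop :=
  K ∈ G ∧ K.card = k + 1 ∧ C ⊆ K ∧ C.card = j ∧
    (∀ σ ∈ G, (∃ w ∈ K, w ∉ C ∧ insert w C ⊆ σ) → σ ⊆ K) ∧
    (k = j → ∀ x ∈ C, ∀ y ∈ K, y ∉ C → x < y)

/-- `(K, C, w, a)` is a copy of `M̂_{j,k}` in `G`. -/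
def IsCopyMhat (G : Set (Finset (Fin N))) (j k : ℕ) (K C : Finset (Fin N)) (w a : Fin N) :
    Prop :=
  IsCopyM G j k K C ∧ w ∈ K ∧ w ∉ C ∧ a ∉ K ∧
    IsShell G j (insert a (insert w C)) ∧ (k = j → ∀ x ∈ K, x ≤ w)

/-- `G + B`: adding the set `B` together with its downward closure to `G`. -/
def addSet (G : Set (Finset (Fin N))) (B : Finset (Fin N)) : Set (Finset (Fin N)) :=
  G ∪ {A | A.Nonempty ∧ A ⊆ B}

/-- `J` is `K`-localised: every simplex of `G` containing `J` is contained in `K`. -/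
def KLocalised (G : Set (Finset (Fin N))) (K J : Finset (Fin N)) : Prop :=
  ∀ σ ∈ G, J ⊆ σ → σ ⊆ K

/-- A `k`-simplex `K` is a local `j`-obstacle: it contains at least `k - j + 1`
many `K`-localised `j`-simplices. -/
def LocalObstacle (G : Set (Finset (Fin N))) (j k : ℕ) (K : Finset (Fin N)) : Prop :=
  K ∈ G ∧ K.card = k + 1 ∧
    k - j + 1 ≤ {J : Finset (Fin N) | J ⊆ K ∧ J.card = j + 1 ∧ J ∈ G ∧ KLocalised G K J}.ncard

/-- The number of copies of `M_{j,k}` in `G`. -/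
def countM (j k : ℕ) (G : Set (Finset (Fin N))) : ℕ :=
  Set.ncard {KC : Finset (Fin N) × Finset (Fin N) | IsCopyM G j k KC.1 KC.2}

/-! ### The random model: independent uniform birth times -/

/-- The sample space: a birth time for each set of vertices. -/
abbrev Omega (n : ℕ) : Type := Finset (Fin n) → ℝ

/-- The probability measure: independent `Uniform[0,1]` birth times. -/
def P (n : ℕ) : Measure (Omega n) :=
  Measure.pi fun _ => volume.restrict (Set.Icc (0 : ℝ) 1)

/-- An event holds with high probability. -/
def WHP (E : (n : ℕ) → Set (Omega n)) : Prop :=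
  Tendsto (fun n => P n (E n)) atTop (nhds 1)

/-- The random `d`-complex determined by birth times `ω`: all singletons together
with the downward closure of all sets `K` with `2 ≤ |K| ≤ d+1` whose birth time is
at most `p (|K| - 1)`; i.e. the downward closure of the non-uniform binomial
random hypergraph `G(n,p)`. -/
def birthComplex (d n : ℕ) (p : ℕ → ℝ) (ω : Omega n) : Set (Finset (Fin n)) :=
  {A | A.Nonempty ∧ (A.card = 1 ∨ ∃ K : Finset (Fin n),
    A ⊆ K ∧ 2 ≤ K.card ∧ K.card ≤ d + 1 ∧ ω K ≤ p (K.card - 1))}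

/-- The process `𝒢_τ = 𝒢(n, τ p̄)`: the complex of all simplices with scaled birth
time at most `τ`. -/
def Gproc (d : ℕ) (p : ℕ → ℕ → ℝ) (n : ℕ) (τ : ℝ) (ω : Omega n) : Set (Finset (Fin n)) :=
  birthComplex d n (fun k => τ * p n k) ω

/-- `G` contains a copy of `M̂_{j,k}` for some `j ≤ k ≤ d`. -/
def ContainsMhat (d j : ℕ) {n : ℕ} (G : Set (Finset (Fin n))) : Prop :=
  ∃ k, j ≤ k ∧ k ≤ d ∧ ∃ K C : Finset (Fin n), ∃ w a : Fin n, IsCopyMhat G j k K C w a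

/-- The hitting time `τ_j^*` for the disappearance of the last minimal obstruction. -/
def tstar (d j : ℕ) (p : ℕ → ℕ → ℝ) (n : ℕ) (ω : Omega n) : ℝ :=
  sSup {τ : ℝ | 0 ≤ τ ∧ ContainsMhat d j (Gproc d p n τ ω)}

/-! ### Directions and their parameters -/

/-- A direction `p̄` together with its parametrisation `ᾱ, β̄, γ̄`
(`p k n` is `p̄_k(n)`, `β n k` is `β̄_k(n)`). -/
structure DirData where
  p : ℕ → ℕ → ℝ
  α : ℕ → ℝ
  β : ℕ → ℕ → ℝ
  γ : ℕ → ℝ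

/-- `j`-admissibility of a direction (Definition 2.3). -/
def IsAdmissible (d j : ℕ) (D : DirData) : Prop :=
  (∀ n k, 0 ≤ D.p n k) ∧
  (∀ k, 1 ≤ k → k ≤ d → ∀ n : ℕ,
    D.p n k = (D.α k * Real.log n + D.β n k) / (n : ℝ) ^ ((k : ℝ) - (j : ℝ) + D.γ k)
      * (Nat.factorial (k - j) : ℝ)) ∧
  (∀ k, 1 ≤ k → k ≤ d → (D.α k = 0 ∨ D.γ k = 0) ∧ 0 ≤ D.α k ∧ 0 ≤ D.γ k) ∧
  (∀ k, 1 ≤ k → k ≤ d → D.α k = 0 →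
    (∀ n, D.β n k = 0) ∨ ((∀ n, 0 < D.β n k) ∧ ∀ ε : ℝ, 0 < ε →
      ((fun n => D.β n k) =o[atTop] fun n : ℕ => (n : ℝ) ^ ε) ∧
      ((fun n : ℕ => (n : ℝ) ^ (-ε)) =o[atTop] fun n => D.β n k))) ∧
  (∀ k, 1 ≤ k → k ≤ d → D.γ k = 0 →
    (fun n => |D.β n k|) =o[atTop] fun n : ℕ => Real.log n) ∧
  (∃ k, j + 1 ≤ k ∧ k ≤ d ∧ 0 < D.α k)

/-- `λ_k`, computed from parameter functions. -/
def lamP (d j : ℕ) (α γ : ℕ → ℝ) (k : ℕ) : ℝ :=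
  (j : ℝ) + 1 - γ k - ((k : ℝ) - (j : ℝ) + 1) * ∑ i ∈ Finset.Icc (j + 1) d, α i

/-- `μ_k`, computed from parameter functions. -/
def muP (d j : ℕ) (α : ℕ → ℝ) (β : ℕ → ℕ → ℝ) (γ : ℕ → ℝ) (p : ℕ → ℕ → ℝ)
    (n k : ℕ) : ℝ :=
  -(((k : ℝ) - (j : ℝ) + 1) * ∑ i ∈ Finset.Icc (j + 1) d, β n i / (n : ℝ) ^ (γ i)) +
    (if 1 < p n k then 0
     else if α k ≠ 0 then Real.log (Real.log n)
     else Real.log (β n k))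

/-- `ν_k`, computed from parameter functions. -/
def nuP (j : ℕ) (α : ℕ → ℝ) (k : ℕ) : ℝ :=
  if k = j then -Real.log (Nat.factorial (j + 1) : ℝ)
  else if α k ≠ 0 then
    -Real.log (Nat.factorial j : ℝ) - Real.log ((k : ℝ) - (j : ℝ) + 1) + Real.log (α k)
  else -Real.log (Nat.factorial j : ℝ) - Real.log ((k : ℝ) - (j : ℝ) + 1)

def DirData.lam (D : DirData) (d j k : ℕ) : ℝ := lamP d j D.α D.γ k

def DirData.mu (D : DirData) (d j : ℕ) (n k : ℕ) : ℝ := muP d j D.α D.β D.γ D.p n k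

def DirData.nu (D : DirData) (j k : ℕ) : ℝ := nuP j D.α k

/-- A `j`-critical direction (Definition 2.4). -/
def IsCriticalDirection (d j : ℕ) (D : DirData) : Prop :=
  IsAdmissible d j D ∧
  (∀ k, j ≤ k → k ≤ d → (∃ n, D.p n k ≠ 0) →
    ∀ᶠ n : ℕ in atTop, D.lam d j k * Real.log n + D.mu d j n k + D.nu j k ≤ 0) ∧
  ∃ k, j ≤ k ∧ k ≤ d ∧
    ∀ᶠ n : ℕ in atTop, D.lam d j k * Real.log n + D.mu d j n k + D.nu j k = 0

/-- `k` is a critical dimension of the `j`-critical direction `D`. -/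
def IsCriticalDim (d j : ℕ) (D : DirData) (k : ℕ) : Prop :=
  j ≤ k ∧ k ≤ d ∧ (∃ n, D.p n k ≠ 0) ∧ D.lam d j k = 0 ∧
    (fun n => D.mu d j n k) =O[atTop] fun _ : ℕ => (1 : ℝ)

/-- The quantity `ℰ = exp(-c(j+1)) ∑_{k ∈ 𝒞} exp(μ̄_k + ν̄_k + c γ̄_k)`. -/
def Ecal (d j : ℕ) (D : DirData) (c : ℝ) (n : ℕ) : ℝ :=
  Real.exp (-(c * ((j : ℝ) + 1))) *
    ∑ k ∈ Finset.Icc j d,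
      if IsCriticalDim d j D k then Real.exp (D.mu d j n k + D.nu j k + c * D.γ k) else 0

/-- `q̄ = ∏_{k=j+1}^d (1 - p̄_k)^{binom(n-j-1, k-j)}`. -/
def qbar (d j : ℕ) (D : DirData) (n : ℕ) : ℝ :=
  ∏ k ∈ Finset.Icc (j + 1) d, (1 - D.p n k) ^ (Nat.choose (n - j - 1) (k - j))

end RSC

end
namespace RSC

noncomputable section Aux

open Equiv Finset Function

variable {N : ℕ} {R : Type} [AddCommGroup R]

lemma val_succAbove {m : ℕ} (p : Fin (m + 1)) (i : Fin m) :
    (p.succAbove i : ℕ) = if (i : ℕ) < (p : ℕ) then (i : ℕ) else (i : ℕ) + 1 := by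
  rw [Fin.succAbove]
  split_ifs with h1 h2 h3 <;>
    simp_all [Fin.lt_def, Fin.ext_iff] <;> omega

lemma image_comp_subset {m m' : ℕ} (τ : Fin m' → Fin N) (u : Fin m → Fin m') :
    Finset.image (τ ∘ u) Finset.univ ⊆ Finset.image τ Finset.univ := by
  intro y hy
  rw [Finset.mem_image] at hy ⊢
  obtain ⟨x, -, rfl⟩ := hy
  exact ⟨u x, Finset.mem_univ _, rfl⟩

lemma image_comp_perm {m : ℕ} (σ : Fin m → Fin N) (c : Equiv.Perm (Fin m)) :
    Finset.image (σ ∘ c) Finset.univ = Finset.image σ Finset.univ := by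
  rw [← Finset.image_image, Finset.image_univ_equiv]

/-- `δδ = 0` as an identity on functions on tuples. -/
lemma delta_delta {m : ℕ} (g : (Fin m → Fin N) → R) (τ : Fin (m + 2) → Fin N) :
    delta (delta g) τ = 0 := by
  have step : delta (delta g) τ =
      ∑ p : Fin (m + 2) × Fin (m + 1),
        (-1 : ℤ) ^ ((p.1 : ℕ) + (p.2 : ℕ)) • g (τ ∘ (p.1.succAbove ∘ p.2.succAbove)) := by
    rw [Fintype.sum_prod_type]
    refine Finset.sum_congr rfl fun i _ => ?_
    show (-1 : ℤ) ^ (i : ℕ) • delta g (τ ∘ i.succAbove) = _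
    rw [delta, Finset.smul_sum]
    exact Finset.sum_congr rfl fun l _ => by
      rw [smul_smul, ← pow_add]; rfl
  rw [step]
  set F : Fin (m + 2) × Fin (m + 1) → R := fun p =>
    (-1 : ℤ) ^ ((p.1 : ℕ) + (p.2 : ℕ)) • g (τ ∘ (p.1.succAbove ∘ p.2.succAbove)) with hF
  refine Finset.sum_ninvolution
    (fun p => if h : (p.2 : ℕ) < (p.1 : ℕ) then
        ((⟨(p.2 : ℕ), by omega⟩ : Fin (m + 2)), (⟨(p.1 : ℕ) - 1, by omega⟩ : Fin (m + 1)))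
      else
        ((⟨(p.2 : ℕ) + 1, by omega⟩ : Fin (m + 2)), (⟨(p.1 : ℕ), by omega⟩ : Fin (m + 1))))
    (fun p => ?_) (fun p _ => ?_) (fun p => Finset.mem_univ _) (fun p => ?_)
  · -- pairing sums to zero
    by_cases h : (p.2 : ℕ) < (p.1 : ℕ)
    · rw [dif_pos h]
      have hcomp : τ ∘ (p.1.succAbove ∘ p.2.succAbove) =
          τ ∘ ((⟨(p.2 : ℕ), by omega⟩ : Fin (m + 2)).succAbove ∘
            (⟨(p.1 : ℕ) - 1, by omega⟩ : Fin (m + 1)).succAbove) := by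
        funext x
        refine congrArg τ (Fin.ext ?_)
        simp only [Function.comp_apply, val_succAbove]
        split_ifs <;> omega
      have hexp : (p.1 : ℕ) + (p.2 : ℕ) = ((p.2 : ℕ) + ((p.1 : ℕ) - 1)) + 1 := by omega
      simp only [hF, hcomp, hexp, pow_succ, mul_neg_one, neg_smul]
      exact neg_add_cancel _
    · rw [dif_neg h]
      have hcomp : τ ∘ (p.1.succAbove ∘ p.2.succAbove) =
          τ ∘ ((⟨(p.2 : ℕ) + 1, by omega⟩ : Fin (m + 2)).succAbove ∘
            (⟨(p.1 : ℕ), by omega⟩ : Fin (m + 1)).succAbove) := by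
        funext x
        refine congrArg τ (Fin.ext ?_)
        simp only [Function.comp_apply, val_succAbove]
        split_ifs <;> omega
      have hexp : ((p.2 : ℕ) + 1) + (p.1 : ℕ) = ((p.1 : ℕ) + (p.2 : ℕ)) + 1 := by omega
      simp only [hF, hcomp, hexp, pow_succ, mul_neg_one, neg_smul]
      exact add_neg_cancel _
  · -- no fixed points
    by_cases h : (p.2 : ℕ) < (p.1 : ℕ)
    · rw [dif_pos h]
      intro heq
      have := congrArg (fun q : Fin (m + 2) × Fin (m + 1) => (q.1 : ℕ)) heq
      simp only at this
      omega
    · rw [dif_neg h]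
      intro heq
      have := congrArg (fun q : Fin (m + 2) × Fin (m + 1) => (q.1 : ℕ)) heq
      simp only at this
      omega
  · -- involution
    by_cases h : (p.2 : ℕ) < (p.1 : ℕ)
    · rw [dif_pos h, dif_neg (by simp; omega)]
      refine Prod.ext (Fin.ext ?_) (Fin.ext ?_) <;> simp <;> omega
    · rw [dif_neg h, dif_pos (by simp; omega)]
      refine Prod.ext (Fin.ext ?_) (Fin.ext ?_) <;> simp <;> omega

lemma swap_comp_succAbove {m : ℕ} (l a b : Fin (m + 1)) (ha : a ≠ l) (hb : b ≠ l)
    (hab : a ≠ b) :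
    ∃ a' b' : Fin m, a' ≠ b' ∧
      ∀ x, Equiv.swap a b (l.succAbove x) = l.succAbove (Equiv.swap a' b' x) := by
  obtain ⟨a', ha'⟩ := Fin.exists_succAbove_eq ha
  obtain ⟨b', hb'⟩ := Fin.exists_succAbove_eq hb
  refine ⟨a', b', fun hcc => hab (by rw [← ha', ← hb', hcc]), fun x => ?_⟩
  rcases eq_or_ne x a' with rfl | hxa
  · rw [ha', Equiv.swap_apply_left, Equiv.swap_apply_left, hb']
  rcases eq_or_ne x b' with rfl | hxb
  · rw [hb', Equiv.swap_apply_right, Equiv.swap_apply_right, ha']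
  · rw [Equiv.swap_apply_of_ne_of_ne (fun hc => hxa (Fin.succAbove_right_injective (hc.trans ha'.symm)))
      (fun hc => hxb (Fin.succAbove_right_injective (hc.trans hb'.symm))),
      Equiv.swap_apply_of_ne_of_ne hxa hxb]

lemma swap_succAbove_castSucc {m : ℕ} (i : Fin m) (x : Fin m) :
    Equiv.swap i.castSucc i.succ (i.castSucc.succAbove x) = i.succ.succAbove x := by
  refine Fin.ext ?_
  rw [Equiv.swap_apply_def]
  split_ifs with h1 h2 <;>
    simp_all [Fin.ext_iff, val_succAbove] <;>
    split_ifs at * <;> omega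

lemma swap_succAbove_succ {m : ℕ} (i : Fin m) (x : Fin m) :
    Equiv.swap i.castSucc i.succ (i.succ.succAbove x) = i.castSucc.succAbove x := by
  refine Fin.ext ?_
  rw [Equiv.swap_apply_def]
  split_ifs with h1 h2 <;>
    simp_all [Fin.ext_iff, val_succAbove] <;>
    split_ifs at * <;> omega

lemma delta_swap_adjacent {m : ℕ} {g : (Fin m → Fin N) → R}
    (hg : ∀ (σ : Fin m → Fin N) (a b : Fin m), a ≠ b → g (σ ∘ Equiv.swap a b) = - g σ)
    (σ : Fin (m + 1) → Fin N) (i : Fin m) :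
    delta g (σ ∘ Equiv.swap i.castSucc i.succ) = - delta g σ := by
  have hne : i.castSucc ≠ i.succ := (Fin.castSucc_lt_succ : i.castSucc < i.succ).ne
  have key : ∀ l : Fin (m + 1),
      (-1 : ℤ) ^ (l : ℕ) • g ((σ ∘ Equiv.swap i.castSucc i.succ) ∘ l.succAbove) =
      - ((-1 : ℤ) ^ ((Equiv.swap i.castSucc i.succ l : Fin (m + 1)) : ℕ) •
          g (σ ∘ (Equiv.swap i.castSucc i.succ l).succAbove)) := by
    intro l
    rcases eq_or_ne l i.castSucc with rfl | hl1
    · rw [Equiv.swap_apply_left]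
      have hcomp : (σ ∘ Equiv.swap i.castSucc i.succ) ∘ (i.castSucc).succAbove =
          σ ∘ i.succ.succAbove := funext fun x => congrArg σ (swap_succAbove_castSucc i x)
      rw [hcomp]
      have : ((i.succ : Fin (m + 1)) : ℕ) = ((i.castSucc : Fin (m+1)) : ℕ) + 1 := by simp
      rw [this, pow_succ, mul_neg_one, neg_smul, neg_neg]
    rcases eq_or_ne l i.succ with rfl | hl2
    · rw [Equiv.swap_apply_right]
      have hcomp : (σ ∘ Equiv.swap i.castSucc i.succ) ∘ (i.succ).succAbove =
          σ ∘ i.castSucc.succAbove := funext fun x => congrArg σ (swap_succAbove_succ i x)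
      rw [hcomp]
      have : ((i.succ : Fin (m + 1)) : ℕ) = ((i.castSucc : Fin (m+1)) : ℕ) + 1 := by simp
      rw [this, pow_succ, mul_neg_one, neg_smul]
    · rw [Equiv.swap_apply_of_ne_of_ne hl1 hl2]
      obtain ⟨a', b', hab, hsw⟩ :=
        swap_comp_succAbove l i.castSucc i.succ (Ne.symm hl1) (Ne.symm hl2) hne
      have hcomp : (σ ∘ Equiv.swap i.castSucc i.succ) ∘ l.succAbove =
          (σ ∘ l.succAbove) ∘ Equiv.swap a' b' := funext fun x => congrArg σ (hsw x)
      rw [hcomp, hg _ _ _ hab, smul_neg]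
  calc delta g (σ ∘ Equiv.swap i.castSucc i.succ)
      = ∑ l : Fin (m + 1),
          - ((-1 : ℤ) ^ ((Equiv.swap i.castSucc i.succ l : Fin (m + 1)) : ℕ) •
            g (σ ∘ (Equiv.swap i.castSucc i.succ l).succAbove)) :=
        Finset.sum_congr rfl fun l _ => key l
    _ = - ∑ l : Fin (m + 1),
          (-1 : ℤ) ^ ((Equiv.swap i.castSucc i.succ l : Fin (m + 1)) : ℕ) •
            g (σ ∘ (Equiv.swap i.castSucc i.succ l).succAbove) := by
        rw [Finset.sum_neg_distrib]
    _ = - delta g σ := by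
        rw [Equiv.sum_comp (Equiv.swap i.castSucc i.succ)
          (fun l : Fin (m + 1) => (-1 : ℤ) ^ (l : ℕ) • g (σ ∘ l.succAbove))]
        rfl

lemma delta_perm {m : ℕ} {g : (Fin m → Fin N) → R}
    (hg : ∀ (σ : Fin m → Fin N) (a b : Fin m), a ≠ b → g (σ ∘ Equiv.swap a b) = - g σ)
    (σ : Fin (m + 1) → Fin N) (c : Equiv.Perm (Fin (m + 1))) :
    delta g (σ ∘ c) = (Equiv.Perm.sign c : ℤ) • delta g σ := by
  have hc : c ∈ Submonoid.closure
      (Set.range fun i : Fin m => Equiv.swap i.castSucc i.succ) := by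
    rw [Equiv.Perm.mclosure_swap_castSucc_succ]; trivial
  revert σ
  induction hc using Submonoid.closure_induction with
  | mem x hx =>
    obtain ⟨i, rfl⟩ := hx
    intro σ
    rw [delta_swap_adjacent hg σ i,
      Equiv.Perm.sign_swap (Fin.castSucc_lt_succ : i.castSucc < i.succ).ne]
    simp
  | one => intro σ; simp
  | mul x y _ _ hx hy =>
    intro σ
    have : σ ∘ ⇑(x * y) = (σ ∘ ⇑x) ∘ ⇑y := rfl
    rw [this, hy (σ ∘ ⇑x), hx σ, smul_smul, Equiv.Perm.sign_mul]
    push_cast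
    rw [mul_comm]

lemma delta_alt {m : ℕ} {g : (Fin m → Fin N) → R}
    (hg : ∀ (σ : Fin m → Fin N) (a b : Fin m), a ≠ b → g (σ ∘ Equiv.swap a b) = - g σ)
    (σ : Fin (m + 1) → Fin N) (a b : Fin (m + 1)) (hab : a ≠ b) :
    delta g (σ ∘ Equiv.swap a b) = - delta g σ := by
  rw [delta_perm hg σ (Equiv.swap a b), Equiv.Perm.sign_swap hab]
  simp

/-- The bijection `Fin m ≃ C` induced by an injective map with image `C`. -/
noncomputable def toCEquiv {m : ℕ} (C : Finset (Fin N)) (hC : C.card = m)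
    (σ : Fin m → Fin N) (h1 : Function.Injective σ) (h2 : ∀ i, σ i ∈ C) :
    Fin m ≃ {x // x ∈ C} :=
  Equiv.ofBijective (fun i => ⟨σ i, h2 i⟩)
    ((Fintype.bijective_iff_injective_and_card _).2
      ⟨fun i i' hii => h1 (congrArg Subtype.val hii), by
        simp [Fintype.card_coe, hC]⟩)

@[simp] lemma toCEquiv_apply {m : ℕ} (C : Finset (Fin N)) (hC : C.card = m)
    (σ : Fin m → Fin N) (h1 : Function.Injective σ) (h2 : ∀ i, σ i ∈ C) (i : Fin m) :
    (toCEquiv C hC σ h1 h2 i : Fin N) = σ i := rfl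

lemma orderEmb_mem {m : ℕ} (C : Finset (Fin N)) (hC : C.card = m) :
    ∀ i, C.orderEmbOfFin hC i ∈ C := fun i => Finset.orderEmbOfFin_mem C hC i

/-- The permutation comparing `σ` with the monotone enumeration of `C`. -/
noncomputable def permOf {m : ℕ} (C : Finset (Fin N)) (hC : C.card = m)
    (σ : Fin m → Fin N) (h1 : Function.Injective σ)
    (h2 : Finset.image σ Finset.univ = C) : Equiv.Perm (Fin m) :=
  (toCEquiv C hC σ h1 (fun i => h2 ▸ Finset.mem_image_of_mem σ (Finset.mem_univ i))).trans
    (toCEquiv C hC (fun i => C.orderEmbOfFin hC i)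
      (C.orderEmbOfFin hC).injective (orderEmb_mem C hC)).symm

lemma permOf_spec {m : ℕ} (C : Finset (Fin N)) (hC : C.card = m)
    (σ : Fin m → Fin N) (h1 : Function.Injective σ)
    (h2 : Finset.image σ Finset.univ = C) (i : Fin m) :
    C.orderEmbOfFin hC (permOf C hC σ h1 h2 i) = σ i := by
  have := congrArg Subtype.val (Equiv.apply_symm_apply
    (toCEquiv C hC (fun i => C.orderEmbOfFin hC i)
      (C.orderEmbOfFin hC).injective (orderEmb_mem C hC))
    ((toCEquiv C hC σ h1 (fun i => h2 ▸ Finset.mem_image_of_mem σ (Finset.mem_univ i))) i))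
  exact this

lemma permOf_unique {m : ℕ} (C : Finset (Fin N)) (hC : C.card = m)
    (σ : Fin m → Fin N) (h1 : Function.Injective σ)
    (h2 : Finset.image σ Finset.univ = C) (π : Equiv.Perm (Fin m))
    (hπ : ∀ i, C.orderEmbOfFin hC (π i) = σ i) : π = permOf C hC σ h1 h2 :=
  Equiv.ext fun i => (C.orderEmbOfFin hC).injective
    (by rw [hπ, permOf_spec])

/-- The basic alternating `(m-1)`-cochain supported on the tuples enumerating `C`. -/
noncomputable def g0 {m : ℕ} (C : Finset (Fin N)) (hC : C.card = m) (r : R) :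
    (Fin m → Fin N) → R := fun σ =>
  if h : Function.Injective σ ∧ Finset.image σ Finset.univ = C then
    ((Equiv.Perm.sign (permOf C hC σ h.1 h.2) : ℤ) • r) else 0

lemma g0_cond_comp_perm {m : ℕ} (C : Finset (Fin N)) (σ : Fin m → Fin N)
    (c : Equiv.Perm (Fin m))
    (h : Function.Injective σ ∧ Finset.image σ Finset.univ = C) :
    Function.Injective (σ ∘ c) ∧ Finset.image (σ ∘ c) Finset.univ = C :=
  ⟨(Equiv.injective_comp c σ).2 h.1, by rw [image_comp_perm]; exact h.2⟩

lemma g0_alt {m : ℕ} (C : Finset (Fin N)) (hC : C.card = m) (r : R) :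
    ∀ (σ : Fin m → Fin N) (a b : Fin m), a ≠ b →
      g0 C hC r (σ ∘ Equiv.swap a b) = - g0 C hC r σ := by
  intro σ a b hab
  by_cases h : Function.Injective σ ∧ Finset.image σ Finset.univ = C
  · have h' := g0_cond_comp_perm C σ (Equiv.swap a b) h
    rw [g0, g0]
    rw [dif_pos h', dif_pos h]
    have hperm : permOf C hC (σ ∘ Equiv.swap a b) h'.1 h'.2 =
        permOf C hC σ h.1 h.2 * Equiv.swap a b := by
      refine (permOf_unique C hC _ h'.1 h'.2 _ fun i => ?_).symm
      rw [Equiv.Perm.mul_apply, permOf_spec]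
      rfl
    rw [hperm, Equiv.Perm.sign_mul, Equiv.Perm.sign_swap hab]
    push_cast
    rw [mul_neg_one, neg_smul]
  · have h' : ¬ (Function.Injective (σ ∘ Equiv.swap a b) ∧
        Finset.image (σ ∘ Equiv.swap a b) Finset.univ = C) := by
      intro hcc
      exact h ⟨(Equiv.injective_comp (Equiv.swap a b) σ).1 hcc.1, by
        rw [← image_comp_perm σ (Equiv.swap a b)]; exact hcc.2⟩
    rw [g0, g0, dif_neg h', dif_neg h, neg_zero]

lemma snoc_injective {m : ℕ} {q : Fin m → Fin N} {x : Fin N}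
    (hq : Function.Injective q) (hx : ∀ i, q i ≠ x) :
    Function.Injective (Fin.snoc q x : Fin (m + 1) → Fin N) := by
  intro p p' hpp
  induction p using Fin.lastCases with
  | last =>
    induction p' using Fin.lastCases with
    | last => rfl
    | cast i' =>
      rw [Fin.snoc_last, Fin.snoc_castSucc] at hpp
      exact absurd hpp.symm (hx i')
  | cast i =>
    induction p' using Fin.lastCases with
    | last =>
      rw [Fin.snoc_last, Fin.snoc_castSucc] at hpp
      exact absurd hpp (hx i)
    | cast i' =>
      rw [Fin.snoc_castSucc, Fin.snoc_castSucc] at hpp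
      exact congrArg _ (hq hpp)

lemma image_snoc {m : ℕ} (q : Fin m → Fin N) (x : Fin N) :
    Finset.image (Fin.snoc q x : Fin (m + 1) → Fin N) Finset.univ =
      insert x (Finset.image q Finset.univ) := by
  ext y
  simp only [Finset.mem_image, Finset.mem_insert, Finset.mem_univ, true_and]
  constructor
  · rintro ⟨i, rfl⟩
    induction i using Fin.lastCases with
    | last => exact Or.inl (Fin.snoc_last ..)
    | cast i' => exact Or.inr ⟨i', by rw [Fin.snoc_castSucc]⟩
  · rintro (rfl | ⟨i, rfl⟩)
    · exact ⟨Fin.last m, Fin.snoc_last ..⟩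
    · exact ⟨i.castSucc, Fin.snoc_castSucc ..⟩

lemma image_orderEmb {m : ℕ} (C : Finset (Fin N)) (hC : C.card = m) :
    Finset.image (fun i => C.orderEmbOfFin hC i) Finset.univ = C := by
  ext x
  simp only [Finset.mem_image, Finset.mem_univ, true_and]
  constructor
  · rintro ⟨i, rfl⟩; exact Finset.orderEmbOfFin_mem C hC i
  · intro hx
    have hr : x ∈ Set.range (C.orderEmbOfFin hC) := by
      rw [Finset.range_orderEmbOfFin]; exact hx
    obtain ⟨i, hi⟩ := hr
    exact ⟨i, hi⟩

end Aux

/-- **Minimal obstructions obstruct cohomological connectedness** (Corollary 4.11).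
If a simplicial complex `G` contains a copy `(K,C,w,a)` of `M̂_{j,k}`, then
`H^j(G;R) ≠ 0`. -/
theorem minimal_obstruction
    (d j k N : ℕ) (hd : 2 ≤ d) (hj : 1 ≤ j) (hjd : j ≤ d - 1)
    (hk1 : j ≤ k) (hk2 : k ≤ d)
    (R : Type) [AddCommGroup R] [Nontrivial R]
    (G : Set (Finset (Fin N))) (hG : IsComplex G)
    (K C : Finset (Fin N)) (w a : Fin N) (h : IsCopyMhat G j k K C w a) :
    ¬ HTrivial G R j := by
  obtain ⟨⟨hKG, hKcard, hCK, hCcard, hM, -⟩, hwK, hwC, haK, hshell, -⟩ := h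
  obtain ⟨r, hr⟩ := exists_ne (0 : R)
  intro htriv
  set e : Fin j → Fin N := fun i => C.orderEmbOfFin hCcard i with he
  have he_inj : Function.Injective e := (C.orderEmbOfFin hCcard).injective
  have he_img : Finset.image e Finset.univ = C := image_orderEmb C hCcard
  have he_memC : ∀ i, e i ∈ C := orderEmb_mem C hCcard
  set σw : Fin (j + 1) → Fin N := Fin.snoc e w with hσw
  have hσw_inj : Function.Injective σw :=
    snoc_injective he_inj (fun i hi => hwC (hi ▸ he_memC i))
  have hσw_img : Finset.image σw Finset.univ = insert w C := by
    rw [hσw, image_snoc, he_img]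
  have hwCK : insert w C ⊆ K := Finset.insert_subset hwK hCK
  have hσw_memK : Finset.image σw Finset.univ ⊆ K := by rw [hσw_img]; exact hwCK
  set τA : Fin (j + 2) → Fin N := Fin.snoc σw a with hτA
  have hτA_inj : Function.Injective τA :=
    snoc_injective hσw_inj (fun i hi =>
      haK (hσw_memK (hi ▸ Finset.mem_image_of_mem σw (Finset.mem_univ i))))
  have hτA_img : Finset.image τA Finset.univ = insert a (insert w C) := by
    rw [hτA, image_snoc, hσw_img]
  set g₀ : (Fin j → Fin N) → R := g0 C hCcard r with hg₀
  have hg0alt := g0_alt C hCcard r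
  set f : (Fin (j + 1) → Fin N) → R := fun σ =>
    if Function.Injective σ ∧ Finset.image σ Finset.univ ⊆ K then delta g₀ σ else 0 with hf
  have hfne : ∀ σ, f σ ≠ 0 →
      Function.Injective σ ∧ Finset.image σ Finset.univ ⊆ K ∧ delta g₀ σ ≠ 0 := by
    intro σ hσ
    by_cases hc : Function.Injective σ ∧ Finset.image σ Finset.univ ⊆ K
    · refine ⟨hc.1, hc.2, ?_⟩
      simp only [hf, if_pos hc] at hσ
      exact hσ
    · exact absurd (by simp only [hf, if_neg hc]) hσ
  have hdeltag0_ne : ∀ (σ : Fin (j + 1) → Fin N), delta g₀ σ ≠ 0 →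
      ∃ l : Fin (j + 1), Function.Injective (σ ∘ l.succAbove) ∧
        Finset.image (σ ∘ l.succAbove) Finset.univ = C := by
    intro σ hσ
    by_contra hno
    rw [not_exists] at hno
    apply hσ
    show ∑ l : Fin (j + 1), (-1 : ℤ) ^ (l : ℕ) • g₀ (σ ∘ l.succAbove) = 0
    refine Finset.sum_eq_zero fun l _ => ?_
    have hz : g₀ (σ ∘ l.succAbove) = 0 := by
      simp only [hg₀, g0]
      rw [dif_neg (hno l)]
    rw [hz, smul_zero]
  have hcochain : IsCochain G (j + 1) f := by
    constructor
    · intro σ hns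
      by_contra hne
      obtain ⟨hinj, himg, -⟩ := hfne σ hne
      exact hns ⟨hinj, hG.2.2 K hKG _ himg (Finset.univ_nonempty.image σ)⟩
    · intro σ a' b' hab
      by_cases hc : Function.Injective σ ∧ Finset.image σ Finset.univ ⊆ K
      · have hc' : Function.Injective (σ ∘ Equiv.swap a' b') ∧
            Finset.image (σ ∘ Equiv.swap a' b') Finset.univ ⊆ K :=
          ⟨(Equiv.injective_comp _ σ).2 hc.1, by rw [image_comp_perm]; exact hc.2⟩
        simp only [hf, if_pos hc, if_pos hc']
        exact delta_alt hg0alt σ a' b' hab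
      · have hc' : ¬ (Function.Injective (σ ∘ Equiv.swap a' b') ∧
            Finset.image (σ ∘ Equiv.swap a' b') Finset.univ ⊆ K) := fun hx =>
          hc ⟨(Equiv.injective_comp (Equiv.swap a' b') σ).1 hx.1, by
            rw [← image_comp_perm σ (Equiv.swap a' b')]; exact hx.2⟩
        simp only [hf, if_neg hc, if_neg hc', neg_zero]
  have hcocycle : IsCocycle G (j + 1) f := by
    refine ⟨hcochain, fun τ hτ => ?_⟩
    show ∑ i : Fin (j + 2), (-1 : ℤ) ^ (i : ℕ) • f (τ ∘ i.succAbove) = 0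
    by_cases himg : Finset.image τ Finset.univ ⊆ K
    · have hface : ∀ i : Fin (j + 2), f (τ ∘ i.succAbove) = delta g₀ (τ ∘ i.succAbove) := by
        intro i
        have hc : Function.Injective (τ ∘ i.succAbove) ∧
            Finset.image (τ ∘ i.succAbove) Finset.univ ⊆ K :=
          ⟨hτ.1.comp Fin.succAbove_right_injective,
            (image_comp_subset τ i.succAbove).trans himg⟩
        simp only [hf, if_pos hc]
      calc ∑ i : Fin (j + 2), (-1 : ℤ) ^ (i : ℕ) • f (τ ∘ i.succAbove)
          = ∑ i : Fin (j + 2), (-1 : ℤ) ^ (i : ℕ) • delta g₀ (τ ∘ i.succAbove) :=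
            Finset.sum_congr rfl fun i _ => by rw [hface i]
        _ = 0 := delta_delta g₀ τ
    · refine Finset.sum_eq_zero fun i _ => ?_
      have hz : f (τ ∘ i.succAbove) = 0 := by
        by_contra hne
        obtain ⟨hinj_i, himg_i, hdne⟩ := hfne _ hne
        obtain ⟨l, -, hlimg⟩ := hdeltag0_ne _ hdne
        have hCsub : C ⊆ Finset.image (τ ∘ i.succAbove) Finset.univ := by
          rw [← hlimg]
          exact image_comp_subset _ _
        have hScard : (Finset.image (τ ∘ i.succAbove) Finset.univ).card = j + 1 := by
          rw [Finset.card_image_of_injective _ hinj_i, Finset.card_univ, Fintype.card_fin]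
        have hnotsub : ¬ (Finset.image (τ ∘ i.succAbove) Finset.univ ⊆ C) := by
          intro hsub
          have := Finset.card_le_card hsub
          omega
        obtain ⟨v, hvS, hvC⟩ := Finset.not_subset.1 hnotsub
        have hpet : insert v C ⊆ Finset.image τ Finset.univ :=
          (Finset.insert_subset hvS hCsub).trans (image_comp_subset τ i.succAbove)
        exact himg (hM _ hτ.2 ⟨v, himg_i hvS, hvC, hpet⟩)
      rw [hz, smul_zero]
  obtain ⟨g, -, hgeq⟩ := htriv f hcocycle
  have hfaces : ∀ i : Fin (j + 2), OrdSimp G (τA ∘ i.succAbove) := by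
    intro i
    have hinj : Function.Injective (τA ∘ i.succAbove) :=
      hτA_inj.comp Fin.succAbove_right_injective
    refine ⟨hinj, hshell.2 _ ?_ ?_⟩
    · exact hτA_img ▸ image_comp_subset τA i.succAbove
    · rw [Finset.card_image_of_injective _ hinj, Finset.card_univ, Fintype.card_fin]
  have hsum0 : ∑ i : Fin (j + 2), (-1 : ℤ) ^ (i : ℕ) • f (τA ∘ i.succAbove) = 0 := by
    calc ∑ i : Fin (j + 2), (-1 : ℤ) ^ (i : ℕ) • f (τA ∘ i.succAbove)
        = ∑ i : Fin (j + 2), (-1 : ℤ) ^ (i : ℕ) • delta g (τA ∘ i.succAbove) :=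
          Finset.sum_congr rfl fun i _ => by rw [hgeq _ (hfaces i)]
      _ = 0 := delta_delta g τA
  have hτA_last : τA ∘ (Fin.last (j + 1)).succAbove = σw := by
    rw [Fin.succAbove_last]
    funext x
    simp only [hτA, Function.comp_apply]
    rw [Fin.snoc_castSucc]
  have hterm : ∀ i : Fin (j + 2), i ∈ Finset.univ → i ≠ Fin.last (j + 1) →
      (-1 : ℤ) ^ (i : ℕ) • f (τA ∘ i.succAbove) = 0 := by
    intro i _ hi
    have hz : f (τA ∘ i.succAbove) = 0 := by
      by_contra hne
      obtain ⟨-, himg_i, -⟩ := hfne _ hne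
      obtain ⟨z, hz⟩ := Fin.exists_succAbove_eq (Ne.symm hi)
      have hmem : a ∈ Finset.image (τA ∘ i.succAbove) Finset.univ := by
        refine Finset.mem_image.2 ⟨z, Finset.mem_univ _, ?_⟩
        show τA (i.succAbove z) = a
        rw [hz]
        simp only [hτA]
        rw [Fin.snoc_last]
      exact haK (himg_i hmem)
    rw [hz, smul_zero]
  have hsum : ∑ i : Fin (j + 2), (-1 : ℤ) ^ (i : ℕ) • f (τA ∘ i.succAbove)
      = (-1 : ℤ) ^ (j + 1) • f σw := by
    rw [Finset.sum_eq_single_of_mem (Fin.last (j + 1)) (Finset.mem_univ _) hterm,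
      hτA_last, Fin.val_last]
  have hfσw : f σw = delta g₀ σw := by
    simp only [hf, if_pos (⟨hσw_inj, hσw_memK⟩ :
      Function.Injective σw ∧ Finset.image σw Finset.univ ⊆ K)]
  have hlast : σw ∘ (Fin.last j).succAbove = e := by
    rw [Fin.succAbove_last]
    funext x
    simp only [hσw, Function.comp_apply]
    rw [Fin.snoc_castSucc]
  have hgterm : ∀ l : Fin (j + 1), l ∈ Finset.univ → l ≠ Fin.last j →
      (-1 : ℤ) ^ (l : ℕ) • g₀ (σw ∘ l.succAbove) = 0 := by
    intro l _ hl
    have hcond : ¬ (Function.Injective (σw ∘ l.succAbove) ∧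
        Finset.image (σw ∘ l.succAbove) Finset.univ = C) := by
      rintro ⟨-, himgC⟩
      obtain ⟨z, hz⟩ := Fin.exists_succAbove_eq (Ne.symm hl)
      have hwmem : w ∈ C := by
        rw [← himgC]
        refine Finset.mem_image.2 ⟨z, Finset.mem_univ _, ?_⟩
        show σw (l.succAbove z) = w
        rw [hz]
        simp only [hσw]
        rw [Fin.snoc_last]
      exact hwC hwmem
    have hz : g₀ (σw ∘ l.succAbove) = 0 := by
      simp only [hg₀, g0]
      rw [dif_neg hcond]
    rw [hz, smul_zero]
  have hg0e : g₀ e = r := by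
    have hce : Function.Injective e ∧ Finset.image e Finset.univ = C := ⟨he_inj, he_img⟩
    simp only [hg₀, g0]
    rw [dif_pos hce]
    have h1 : permOf C hCcard e hce.1 hce.2 = 1 :=
      (permOf_unique C hCcard e hce.1 hce.2 1 (fun i => rfl)).symm
    rw [h1, Equiv.Perm.sign_one]
    simp
  have hdeltaσw : delta g₀ σw = (-1 : ℤ) ^ j • r := by
    show ∑ l : Fin (j + 1), (-1 : ℤ) ^ (l : ℕ) • g₀ (σw ∘ l.succAbove) = _
    rw [Finset.sum_eq_single_of_mem (Fin.last j) (Finset.mem_univ _) hgterm,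
      hlast, hg0e, Fin.val_last]
  rw [hsum, hfσw, hdeltaσw, smul_smul, ← pow_add] at hsum0
  have hodd : Odd (j + 1 + j) := ⟨j, by omega⟩
  rw [hodd.neg_one_pow, neg_smul, one_smul, neg_eq_zero] at hsum0
  exact hr hsum0

end RSC
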